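/- Let p be an odd prime, q = p^d, and let G ≤ AΓL(1,q) act 2-transitively on F_q. Let H := {a ∈ F_q^× : t(a,0) ∈ G_0}, let P be an imprimitive block for the action of G_0 on F_q^× with 1 ∈ P, and set K := P ∩ H. Let T̃₁ and T̃₂ be the subgroups of the additive group (F_q,+) generated by {a − 1 : a ∈ P} and by P respectively, let T_i := {z ↦ z + c : c ∈ T̃_i} (i = 1,2), let κ be the permutation z ↦ −z + 1 of F_q, let G_{0,P} be the setwise stabilizer of P in G_0, and let J := ⟨G_{0,P}, κ⟩ ≤ Sym(F_q). If |K| is odd, then J₁ := T₁·G_{0,P} is a subgroup of J with T₁ normal in J₁ and T₁ ∩ G_{0,P} = 1, J₁ is normal in J, κ ∉ J₁, and J = J₁ ∪ J₁κ; that is, J = (T₁ ⋊ G_{0,P}) ⋊ ⟨κ⟩ as an internal semidirect product. If |K| is even, then T₂ is normal in J, T₂ ∩ G_{0,P} = 1, and J = T₂·G_{0,P}; that is, J = T₂ ⋊ G_{0,P}. -/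

import Mathlib

open Pointwise

/-- `scalarFrob G p a k` says that the map t(a,k) : z ↦ a·z^{p^k} belongs to G
(as a permutation of the field; such a map automatically fixes 0). -/
def scalarFrob {F : Type*} [Field F] (G : Subgroup (Equiv.Perm F)) (p : ℕ)
    (a : F) (k : ℕ) : Prop :=
  ∃ g ∈ G, ∀ z : F, g z = a * z ^ p ^ k

/-- The group of translations z ↦ c + z with c running over an additive subgroup A. -/
def translations {F : Type*} [Field F] (A : AddSubgroup F) : Subgroup (Equiv.Perm F) where
  carrier := {g : Equiv.Perm F | ∃ c ∈ A, ∀ z : F, g z = c + z}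
  one_mem' := ⟨0, A.zero_mem, fun z => by simp⟩
  mul_mem' := by
    rintro a b ⟨c, hc, ha⟩ ⟨c', hc', hb⟩
    exact ⟨c + c', A.add_mem hc hc', fun z => by
      rw [Equiv.Perm.mul_apply, hb, ha, add_assoc]⟩
  inv_mem' := by
    rintro a ⟨c, hc, ha⟩
    refine ⟨-c, A.neg_mem hc, fun z => ?_⟩
    rw [Equiv.Perm.inv_def, Equiv.symm_apply_eq, ha]
    abel

/-- G_{0,P}: the setwise stabilizer of P in the stabilizer of 0 in G. -/
def pstab {F : Type*} [Field F] (G : Subgroup (Equiv.Perm F)) (P : Set F) :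
    Subgroup (Equiv.Perm F) :=
  (G ⊓ MulAction.stabilizer (Equiv.Perm F) (0 : F)) ⊓
    MulAction.stabilizer (Equiv.Perm F) P

/-- The permutation κ : z ↦ -z + 1 of F. -/
def kappa (F : Type*) [Field F] : Equiv.Perm F :=
  (Equiv.neg F).trans (Equiv.addLeft (1 : F))


section Helpers
variable {F : Type*} [Field F]

/-- translation permutation -/
def tr (c : F) : Equiv.Perm F := Equiv.addLeft c

@[simp] lemma tr_apply (c z : F) : tr c z = c + z := rfl

lemma tr_mul (c c' : F) : tr c * tr c' = tr (c + c') := by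
  ext z; simp [Equiv.Perm.mul_apply, add_assoc]

lemma tr_zero : tr (0 : F) = 1 := by ext z; simp

lemma tr_inv (c : F) : (tr c)⁻¹ = tr (-c) :=
  inv_eq_of_mul_eq_one_left (by rw [tr_mul, neg_add_cancel, tr_zero])

lemma tr_injective : Function.Injective (tr : F → Equiv.Perm F) := by
  intro c c' h
  have := congrArg (fun (g : Equiv.Perm F) => g 0) h
  simpa using this

lemma mem_translations_iff {A : AddSubgroup F} {g : Equiv.Perm F} :
    g ∈ translations A ↔ ∃ c ∈ A, g = tr c := by
  constructor
  · rintro ⟨c, hc, h⟩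
    exact ⟨c, hc, Equiv.ext fun z => by rw [h z, tr_apply]⟩
  · rintro ⟨c, hc, rfl⟩
    exact ⟨c, hc, fun z => rfl⟩

lemma tr_mem_translations {A : AddSubgroup F} {c : F} (h : c ∈ A) : tr c ∈ translations A :=
  mem_translations_iff.mpr ⟨c, h, rfl⟩

@[simp] lemma kappa_apply (z : F) : kappa F z = -z + 1 := by
  simp [kappa, Equiv.trans_apply, add_comm]

lemma kappa_mul_self : kappa F * kappa F = 1 := by
  ext z; simp [Equiv.Perm.mul_apply]

lemma kappa_inv : (kappa F)⁻¹ = kappa F := inv_eq_of_mul_eq_one_left kappa_mul_self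

lemma kappa_mul_tr (c : F) : kappa F * tr c = tr (-c) * kappa F := by
  ext z; simp [Equiv.Perm.mul_apply]; ring

lemma perm_smul_set (g : Equiv.Perm F) (P : Set F) : g • P = ⇑g '' P := by
  ext x
  simp only [Set.mem_smul_set, Equiv.Perm.smul_def, Set.mem_image]

lemma mem_pstab_iff {G : Subgroup (Equiv.Perm F)} {P : Set F} {g : Equiv.Perm F} :
    g ∈ pstab G P ↔ g ∈ G ∧ g 0 = 0 ∧ ⇑g '' P = P := by
  simp only [pstab, Subgroup.mem_inf, MulAction.mem_stabilizer_iff, and_assoc]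
  constructor
  · rintro ⟨h1, h2, h3⟩
    refine ⟨h1, by simpa [Equiv.Perm.smul_def] using h2, ?_⟩
    rw [← perm_smul_set, h3]
  · rintro ⟨h1, h2, h3⟩
    refine ⟨h1, by simpa [Equiv.Perm.smul_def] using h2, ?_⟩
    rw [perm_smul_set, h3]

end Helpers
/-- Lemma 3.11: let p be an odd prime, q = p^d, G ≤ AΓL(1,q) 2-transitive on F_q,
H := {a : t(a,0) ∈ G₀}, P an imprimitive block of G₀ on F_q^× with 1 ∈ P, K := P ∩ H,
T̃₁, T̃₂ the additive subgroups of (F_q,+) generated by {a-1 : a ∈ P} and by P, T_i the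
corresponding translation groups, κ : z ↦ -z+1, and J := ⟨G_{0,P}, κ⟩. If |K| is odd
then J = (T₁ ⋊ G_{0,P}) ⋊ ⟨κ⟩; if |K| is even then J = T₂ ⋊ G_{0,P}. -/
theorem stmt_14 {F : Type*} [Field F] [Fintype F] (p d : ℕ) (hp : p.Prime) (hpodd : Odd p)
    (hd : 0 < d) (hcard : Fintype.card F = p ^ d)
    (G : Subgroup (Equiv.Perm F))
    (hAGL : ∀ g ∈ G, ∃ (a c : F) (k : ℕ), ∀ z : F, g z = a * z ^ p ^ k + c)
    (h2trans : ∀ x y x' y' : F, x ≠ y → x' ≠ y' → ∃ g ∈ G, g x = x' ∧ g y = y')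
    (P : Set F) (hP0 : ∀ z ∈ P, z ≠ 0) (hP1 : (1 : F) ∈ P)
    (hPblock : ∀ g ∈ G, g 0 = 0 → (⇑g '' P = P ∨ (⇑g '' P) ∩ P = ∅)) :
    -- the case |K| odd: J = (T₁ ⋊ G_{0,P}) ⋊ ⟨κ⟩
    (Odd (Set.ncard (P ∩ {a : F | scalarFrob G p a 0})) →
      ∃ J₁ : Subgroup (Equiv.Perm F),
        (J₁ : Set (Equiv.Perm F)) =
          (translations (AddSubgroup.closure {x : F | ∃ a ∈ P, x = a - 1}) :
              Set (Equiv.Perm F)) * (pstab G P : Set (Equiv.Perm F)) ∧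
        J₁ ≤ Subgroup.closure ((pstab G P : Set (Equiv.Perm F)) ∪ {kappa F}) ∧
        translations (AddSubgroup.closure {x : F | ∃ a ∈ P, x = a - 1}) ≤ J₁ ∧
        (∀ x ∈ J₁, ∀ t ∈ translations (AddSubgroup.closure {x : F | ∃ a ∈ P, x = a - 1}),
          x * t * x⁻¹ ∈ translations (AddSubgroup.closure {x : F | ∃ a ∈ P, x = a - 1})) ∧
        ((translations (AddSubgroup.closure {x : F | ∃ a ∈ P, x = a - 1}) :
            Set (Equiv.Perm F)) ∩ (pstab G P : Set (Equiv.Perm F)) = {1}) ∧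
        (∀ x ∈ Subgroup.closure ((pstab G P : Set (Equiv.Perm F)) ∪ {kappa F}),
          ∀ y ∈ J₁, x * y * x⁻¹ ∈ J₁) ∧
        kappa F ∉ J₁ ∧
        ((Subgroup.closure ((pstab G P : Set (Equiv.Perm F)) ∪ {kappa F}) :
            Set (Equiv.Perm F)) =
          (J₁ : Set (Equiv.Perm F)) ∪
            (J₁ : Set (Equiv.Perm F)) * ({kappa F} : Set (Equiv.Perm F)))) ∧
    -- the case |K| even: J = T₂ ⋊ G_{0,P}
    (Even (Set.ncard (P ∩ {a : F | scalarFrob G p a 0})) →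
      translations (AddSubgroup.closure P) ≤
        Subgroup.closure ((pstab G P : Set (Equiv.Perm F)) ∪ {kappa F}) ∧
      (∀ x ∈ Subgroup.closure ((pstab G P : Set (Equiv.Perm F)) ∪ {kappa F}),
        ∀ t ∈ translations (AddSubgroup.closure P),
          x * t * x⁻¹ ∈ translations (AddSubgroup.closure P)) ∧
      ((translations (AddSubgroup.closure P) : Set (Equiv.Perm F)) ∩
        (pstab G P : Set (Equiv.Perm F)) = {1}) ∧
      ((Subgroup.closure ((pstab G P : Set (Equiv.Perm F)) ∪ {kappa F}) :
          Set (Equiv.Perm F)) =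
        (translations (AddSubgroup.closure P) : Set (Equiv.Perm F)) *
          (pstab G P : Set (Equiv.Perm F)))) := by

  classical
  haveI : Fact p.Prime := ⟨hp⟩
  have hchar : CharP F p := by
    obtain ⟨p', hp'⟩ := CharP.exists F
    haveI := hp'
    obtain ⟨n, hp'prime, hcard'⟩ := FiniteField.card F p'
    have hpp' : p = p' := by
      have hdvd : p ∣ p' ^ (n : ℕ) := by
        rw [← hcard', hcard]
        exact dvd_pow_self p hd.ne'
      exact (Nat.prime_dvd_prime_iff_eq hp hp'prime).mp (hp.dvd_of_dvd_pow hdvd)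
    rwa [hpp']
  haveI := hchar
  have hfrob : ∀ (x y : F) (k : ℕ), (x + y) ^ p ^ k = x ^ p ^ k + y ^ p ^ k :=
    fun x y k => add_pow_char_pow x y p k
  have hnegpow : ∀ (x : F) (k : ℕ), (-x) ^ p ^ k = -(x ^ p ^ k) :=
    fun x k => (hpodd.pow).neg_pow x
  -- abbreviations
  set Jgrp := Subgroup.closure ((pstab G P : Set (Equiv.Perm F)) ∪ {kappa F}) with hJdef
  set T1s := AddSubgroup.closure {x : F | ∃ a ∈ P, x = a - 1} with hT1def
  have hpstabJ : ∀ g ∈ pstab G P, g ∈ Jgrp := fun g hg => Subgroup.subset_closure (Or.inl hg)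
  have hκJ : kappa F ∈ Jgrp := Subgroup.subset_closure (Or.inr rfl)
  -- every element of pstab has the form z ↦ a z^{p^k} with a ∈ P
  have himg : ∀ g ∈ pstab G P, ∀ b ∈ P, g b ∈ P := by
    intro g hg b hb
    obtain ⟨-, -, hgP⟩ := mem_pstab_iff.mp hg
    rw [← hgP]
    exact Set.mem_image_of_mem _ hb
  have hform : ∀ g ∈ pstab G P, ∃ a ∈ P, ∃ k : ℕ, ∀ z : F, g z = a * z ^ p ^ k := by
    intro g hg
    obtain ⟨hgG, hg0, hgP⟩ := mem_pstab_iff.mp hg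
    obtain ⟨a, c, k, hf⟩ := hAGL g hgG
    have hc : c = 0 := by
      have h0 := hf 0
      rw [hg0, zero_pow (pow_pos hp.pos k).ne', mul_zero, zero_add] at h0
      exact h0.symm
    have hfz : ∀ z : F, g z = a * z ^ p ^ k := fun z => by rw [hf z, hc, add_zero]
    have haP : a ∈ P := by
      have := himg g hg 1 hP1
      rwa [hfz 1, one_pow, mul_one] at this
    exact ⟨a, haP, k, hfz⟩
  have hmk : ∀ a ∈ P, ∃ g ∈ pstab G P, ∃ k : ℕ, ∀ z : F, g z = a * z ^ p ^ k := by
    intro a haP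
    obtain ⟨g, hgG, hg0, hg1⟩ := h2trans 0 1 0 a zero_ne_one (Ne.symm (hP0 a haP))
    obtain ⟨a', c, k, hf⟩ := hAGL g hgG
    have hc : c = 0 := by
      have h0 := hf 0
      rw [hg0, zero_pow (pow_pos hp.pos k).ne', mul_zero, zero_add] at h0
      exact h0.symm
    have ha' : a' = a := by
      have h1 := hf 1
      rw [hg1, one_pow, mul_one, hc, add_zero] at h1
      exact h1.symm
    have hgP : ⇑g '' P = P := by
      rcases hPblock g hgG hg0 with h | h
      · exact h
      · exfalso
        have hmem : a ∈ (⇑g '' P) ∩ P := ⟨⟨1, hP1, hg1⟩, haP⟩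
        rw [h] at hmem
        exact hmem
    refine ⟨g, mem_pstab_iff.mpr ⟨hgG, hg0, hgP⟩, k, fun z => ?_⟩
    rw [hf z, hc, ha', add_zero]
  -- commutation relations
  have hcomm1 : ∀ (g : Equiv.Perm F) (a : F) (k : ℕ), (∀ z : F, g z = a * z ^ p ^ k) →
      ∀ c : F, g * tr c = tr (a * c ^ p ^ k) * g := by
    intro g a k hg c
    ext z
    simp only [Equiv.Perm.mul_apply, tr_apply, hg]
    rw [hfrob]
    ring
  have hconj1 : ∀ (g : Equiv.Perm F) (a : F) (k : ℕ), (∀ z : F, g z = a * z ^ p ^ k) →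
      ∀ c : F, g * tr c * g⁻¹ = tr (a * c ^ p ^ k) := by
    intro g a k hg c
    rw [hcomm1 g a k hg c, mul_assoc, mul_inv_cancel, mul_one]
  have hcommκ : ∀ (g : Equiv.Perm F) (a : F) (k : ℕ), (∀ z : F, g z = a * z ^ p ^ k) →
      kappa F * g = tr (1 - a) * g * kappa F := by
    intro g a k hg
    ext z
    simp only [Equiv.Perm.mul_apply, tr_apply, kappa_apply, hg]
    rw [hfrob, hnegpow, one_pow]
    ring
  have hconjκg : ∀ (g : Equiv.Perm F) (a : F) (k : ℕ), (∀ z : F, g z = a * z ^ p ^ k) →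
      kappa F * g * (kappa F)⁻¹ = tr (1 - a) * g := by
    intro g a k hg
    rw [kappa_inv, hcommκ g a k hg, mul_assoc, kappa_mul_self, mul_one]
  have hconjκtr : ∀ c : F, kappa F * tr c * (kappa F)⁻¹ = tr (-c) := by
    intro c
    rw [kappa_inv, kappa_mul_tr, mul_assoc, kappa_mul_self, mul_one]
  -- translations with entries in a closure, membership in Jgrp
  have htrsub : ∀ (S : Set F), (∀ x ∈ S, tr x ∈ Jgrp) →
      ∀ c ∈ AddSubgroup.closure S, tr c ∈ Jgrp := by
    intro S hS c hc
    refine AddSubgroup.closure_induction (fun x hx => hS x hx) ?_ ?_ ?_ hc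
    · rw [tr_zero]; exact one_mem _
    · intro x y _ _ hx hy
      rw [← tr_mul]; exact mul_mem hx hy
    · intro x _ hx
      rw [← tr_inv]; exact inv_mem hx
  -- invariance of additive closures under z ↦ a z^{p^k}
  have hinvmap : ∀ (S : Set F) (a : F) (k : ℕ),
      (∀ b ∈ S, a * b ^ p ^ k ∈ AddSubgroup.closure S) →
      ∀ c ∈ AddSubgroup.closure S, a * c ^ p ^ k ∈ AddSubgroup.closure S := by
    intro S a k hgen c hc
    refine AddSubgroup.closure_induction hgen ?_ ?_ ?_ hc
    · rw [zero_pow (pow_pos hp.pos k).ne', mul_zero]; exact zero_mem _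
    · intro x y _ _ hx hy
      rw [hfrob, mul_add]; exact add_mem hx hy
    · intro x _ hx
      rw [hnegpow, mul_neg]; exact neg_mem hx
  -- generators for T1 invariance
  have hgen1 : ∀ g ∈ pstab G P, ∀ (a : F) (k : ℕ), (∀ z : F, g z = a * z ^ p ^ k) →
      ∀ x ∈ {x : F | ∃ a ∈ P, x = a - 1}, a * x ^ p ^ k ∈ T1s := by
    intro g hg a k hgz x hx
    obtain ⟨b, hb, rfl⟩ := hx
    have h2 : (b - 1 : F) ^ p ^ k = b ^ p ^ k - 1 := by
      rw [sub_eq_add_neg, hfrob, hnegpow, one_pow, ← sub_eq_add_neg]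
    have habP : a * b ^ p ^ k ∈ P := by
      rw [← hgz b]; exact himg g hg b hb
    have haP : a ∈ P := by
      have := himg g hg 1 hP1
      rwa [hgz 1, one_pow, mul_one] at this
    have h1 : a * (b - 1) ^ p ^ k = (a * b ^ p ^ k - 1) - (a - 1) := by
      rw [h2]; ring
    rw [h1]
    exact sub_mem (AddSubgroup.subset_closure ⟨_, habP, rfl⟩)
      (AddSubgroup.subset_closure ⟨a, haP, rfl⟩)
  have hconjT1 : ∀ g ∈ pstab G P, ∀ t ∈ translations T1s, g * t * g⁻¹ ∈ translations T1s := by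
    intro g hg t ht
    obtain ⟨a, -, k, hgz⟩ := hform g hg
    obtain ⟨c, hc, rfl⟩ := mem_translations_iff.mp ht
    rw [hconj1 g a k hgz c]
    exact tr_mem_translations (hinvmap _ a k (hgen1 g hg a k hgz) c hc)
  have hconjT2 : ∀ g ∈ pstab G P, ∀ t ∈ translations (AddSubgroup.closure P),
      g * t * g⁻¹ ∈ translations (AddSubgroup.closure P) := by
    intro g hg t ht
    obtain ⟨a, -, k, hgz⟩ := hform g hg
    obtain ⟨c, hc, rfl⟩ := mem_translations_iff.mp ht
    rw [hconj1 g a k hgz c]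
    refine tr_mem_translations (hinvmap _ a k ?_ c hc)
    intro b hb
    refine AddSubgroup.subset_closure ?_
    rw [← hgz b]; exact himg g hg b hb
  -- generators of T1 are in Jgrp
  have trgen : ∀ a ∈ P, tr (a - 1) ∈ Jgrp := by
    intro a haP
    obtain ⟨g, hgS, k, hgz⟩ := hmk a haP
    have h2 : kappa F * g * (kappa F)⁻¹ * g⁻¹ = tr (1 - a) := by
      rw [hconjκg g a k hgz, mul_assoc, mul_inv_cancel, mul_one]
    have h3 : tr (a - 1) = (tr (1 - a))⁻¹ := by rw [tr_inv, neg_sub]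
    rw [h3, ← h2]
    exact inv_mem (mul_mem (mul_mem (mul_mem hκJ (hpstabJ g hgS)) (inv_mem hκJ))
      (inv_mem (hpstabJ g hgS)))
  have hT1J : ∀ x ∈ translations T1s, x ∈ Jgrp := by
    intro x hx
    obtain ⟨c, hc, rfl⟩ := mem_translations_iff.mp hx
    refine htrsub _ ?_ c hc
    rintro y ⟨a, ha, rfl⟩
    exact trgen a ha
  -- intersection of translations with pstab is trivial
  have hint : ∀ A : AddSubgroup F,
      (translations A : Set (Equiv.Perm F)) ∩ (pstab G P : Set (Equiv.Perm F)) = {1} := by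
    intro A
    ext x
    simp only [Set.mem_inter_iff, Set.mem_singleton_iff, SetLike.mem_coe]
    constructor
    · rintro ⟨hxT, hxS⟩
      obtain ⟨c, hc, rfl⟩ := mem_translations_iff.mp hxT
      obtain ⟨-, h0, -⟩ := mem_pstab_iff.mp hxS
      have hc0 : c = 0 := by simpa using h0
      rw [hc0, tr_zero]
    · rintro rfl
      exact ⟨one_mem _, one_mem _⟩
  -- K machinery
  have hKpstab : ∀ a : F, a ∈ P ∩ {x : F | scalarFrob G p x 0} →
      ∃ g ∈ pstab G P, ∀ z : F, g z = a * z := by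
    rintro a ⟨haP, ha⟩
    obtain ⟨g, hgG, hg⟩ := ha
    have hg' : ∀ z : F, g z = a * z := fun z => by simpa using hg z
    have hg0 : g 0 = 0 := by rw [hg' 0, mul_zero]
    have hgP : ⇑g '' P = P := by
      rcases hPblock g hgG hg0 with h | h
      · exact h
      · exfalso
        have hmem : a ∈ (⇑g '' P) ∩ P := ⟨⟨1, hP1, by rw [hg' 1, mul_one]⟩, haP⟩
        rw [h] at hmem
        exact hmem
    exact ⟨g, mem_pstab_iff.mpr ⟨hgG, hg0, hgP⟩, hg'⟩
  have hKofpstab : ∀ (g : Equiv.Perm F), g ∈ pstab G P → ∀ a : F, (∀ z : F, g z = a * z) →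
      a ∈ P ∩ {x : F | scalarFrob G p x 0} := by
    intro g hg a hga
    constructor
    · have := himg g hg 1 hP1
      rwa [hga 1, mul_one] at this
    · exact ⟨g, (mem_pstab_iff.mp hg).1, fun z => by rw [hga z]; norm_num⟩
  have hKmul : ∀ a b : F, a ∈ P ∩ {x : F | scalarFrob G p x 0} →
      b ∈ P ∩ {x : F | scalarFrob G p x 0} →
      a * b ∈ P ∩ {x : F | scalarFrob G p x 0} := by
    intro a b ha hb
    obtain ⟨ga, hgaS, hga⟩ := hKpstab a ha
    obtain ⟨gb, hgbS, hgb⟩ := hKpstab b hb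
    refine hKofpstab (ga * gb) (mul_mem hgaS hgbS) (a * b) fun z => ?_
    rw [Equiv.Perm.mul_apply, hgb, hga, mul_assoc]
  have hK1 : (1 : F) ∈ P ∩ {x : F | scalarFrob G p x 0} := by
    refine ⟨hP1, ⟨1, one_mem _, fun z => ?_⟩⟩
    norm_num
  have hKinv : ∀ a : F, a ∈ P ∩ {x : F | scalarFrob G p x 0} →
      a⁻¹ ∈ P ∩ {x : F | scalarFrob G p x 0} := by
    intro a ha
    have hane : a ≠ 0 := hP0 a ha.1
    obtain ⟨ga, hgaS, hga⟩ := hKpstab a ha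
    refine hKofpstab ga⁻¹ (inv_mem hgaS) a⁻¹ fun z => ?_
    apply ga.injective
    rw [Equiv.Perm.coe_inv, Equiv.apply_symm_apply, hga, ← mul_assoc, mul_inv_cancel₀ hane, one_mul]
  -- K as a subgroup of units
  let K' : Subgroup Fˣ :=
    { carrier := {u : Fˣ | (u : F) ∈ P ∩ {x : F | scalarFrob G p x 0}}
      one_mem' := by simpa using hK1
      mul_mem' := by
        intro u v hu hv
        simpa using hKmul u v hu hv
      inv_mem' := by
        intro u hu
        simpa [Units.val_inv_eq_inv_val] using hKinv u hu }
  have hKcard : Set.ncard (P ∩ {x : F | scalarFrob G p x 0}) = Nat.card K' := by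
    have himage : (Units.val '' (K' : Set Fˣ)) = P ∩ {x : F | scalarFrob G p x 0} := by
      ext x
      constructor
      · rintro ⟨u, hu, rfl⟩; exact hu
      · intro hx
        exact ⟨Units.mk0 x (hP0 x hx.1), hx, rfl⟩
    rw [← himage, Set.ncard_image_of_injective _ Units.val_injective, ← Nat.card_coe_set_eq]
    rfl
  have hEvenNeg : Even (Set.ncard (P ∩ {x : F | scalarFrob G p x 0})) →
      (-1 : F) ∈ P ∩ {x : F | scalarFrob G p x 0} := by
    intro he
    haveI : Fintype K' := Fintype.ofFinite K'
    have h2 : (2 : ℕ) ∣ Fintype.card K' := by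
      rw [← Nat.card_eq_fintype_card, ← hKcard]
      exact he.two_dvd
    haveI : Fact (Nat.Prime 2) := ⟨Nat.prime_two⟩
    obtain ⟨x, hx⟩ := exists_prime_orderOf_dvd_card 2 h2
    have hx2 : x * x = 1 := by
      rw [← sq, ← hx, pow_orderOf_eq_one x]
    have hu : ((x : Fˣ) : F) * ((x : Fˣ) : F) = 1 := by
      have := congrArg (fun y : K' => ((y : Fˣ) : F)) hx2
      simpa using this
    have hxne : ((x : Fˣ) : F) ≠ 1 := by
      intro h1
      have h2' : (x : Fˣ) = 1 := Units.ext h1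
      have h3' : x = 1 := Subtype.ext h2'
      rw [h3', orderOf_one] at hx
      norm_num at hx
    have hxval : ((x : Fˣ) : F) = -1 := by
      rcases mul_self_eq_one_iff.mp hu with h | h
      · exact absurd h hxne
      · exact h
    rw [← hxval]
    exact x.2
  have hOddNeg : Odd (Set.ncard (P ∩ {x : F | scalarFrob G p x 0})) →
      (-1 : F) ∉ P ∩ {x : F | scalarFrob G p x 0} := by
    intro ho hmem
    have hp2 : 2 < p := by
      refine hp.two_le.lt_of_ne ?_
      rintro rfl
      simp [Nat.odd_iff] at hpodd
    haveI : Fact (2 < p) := ⟨hp2⟩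
    have hne : (-1 : F) ≠ 1 := CharP.neg_one_ne_one F p
    have hmem' : ((-1 : Fˣ) : F) ∈ P ∩ {x : F | scalarFrob G p x 0} := by
      simpa using hmem
    set x : K' := ⟨-1, hmem'⟩ with hxdef
    have hx2 : x ^ 2 = 1 := by
      apply Subtype.ext
      simp [hxdef]
    have hxne : x ≠ 1 := by
      intro h
      apply hne
      have := congrArg (fun y : K' => ((y : Fˣ) : F)) h
      simpa [hxdef] using this
    have horder : orderOf x = 2 := orderOf_eq_prime hx2 hxne
    have hdvd : 2 ∣ Nat.card K' := horder ▸ orderOf_dvd_natCard x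
    rw [← hKcard] at hdvd
    obtain ⟨m, hm⟩ := hdvd
    rw [hm, Nat.odd_iff] at ho
    omega
  constructor
  · -- odd case
    intro hodd
    have hnotneg := hOddNeg hodd
    let J1 : Subgroup (Equiv.Perm F) :=
      { carrier := (translations T1s : Set (Equiv.Perm F)) * (pstab G P : Set (Equiv.Perm F))
        one_mem' := Set.mem_mul.mpr ⟨1, one_mem _, 1, one_mem _, one_mul 1⟩
        mul_mem' := by
          intro x y hx hy
          obtain ⟨t, ht, g, hg, rfl⟩ := Set.mem_mul.mp hx
          obtain ⟨t', ht', g', hg', rfl⟩ := Set.mem_mul.mp hy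
          refine Set.mem_mul.mpr ⟨t * (g * t' * g⁻¹), ?_, g * g', ?_, by group⟩
          · exact mul_mem ht (hconjT1 g hg t' ht')
          · exact mul_mem hg hg'
        inv_mem' := by
          intro x hx
          obtain ⟨t, ht, g, hg, rfl⟩ := Set.mem_mul.mp hx
          refine Set.mem_mul.mpr ⟨g⁻¹ * t⁻¹ * g, ?_, g⁻¹, inv_mem hg, by group⟩
          have h2 := hconjT1 g⁻¹ (inv_mem hg) t⁻¹ (inv_mem ht)
          simpa using h2 }
    have hmemJ1 : ∀ x : Equiv.Perm F,
        x ∈ J1 ↔ ∃ t ∈ translations T1s, ∃ g ∈ pstab G P, t * g = x :=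
      fun x => Set.mem_mul
    have hJ1le : J1 ≤ Jgrp := by
      intro x hx
      obtain ⟨t, ht, g, hg, rfl⟩ := (hmemJ1 x).mp hx
      exact mul_mem (hT1J t ht) (hpstabJ g hg)
    have hT1le : translations T1s ≤ J1 := by
      intro t ht
      exact (hmemJ1 t).mpr ⟨t, ht, 1, one_mem _, mul_one t⟩
    have hT1norm : ∀ x ∈ J1, ∀ t ∈ translations T1s, x * t * x⁻¹ ∈ translations T1s := by
      intro x hx t ht
      obtain ⟨t', ht', g, hg, rfl⟩ := (hmemJ1 x).mp hx
      have heq : t' * g * t * (t' * g)⁻¹ = t' * (g * t * g⁻¹) * t'⁻¹ := by group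
      rw [heq]
      exact mul_mem (mul_mem ht' (hconjT1 g hg t ht)) (inv_mem ht')
    have hconjgen : ∀ x : Equiv.Perm F, x ∈ (pstab G P : Set (Equiv.Perm F)) ∪ {kappa F} →
        ∀ y ∈ J1, x * y * x⁻¹ ∈ J1 := by
      intro x hx y hy
      obtain ⟨t, ht, g, hg, rfl⟩ := (hmemJ1 y).mp hy
      have heq : x * (t * g) * x⁻¹ = (x * t * x⁻¹) * (x * g * x⁻¹) := by group
      rw [heq]
      rcases hx with hx | hx
      · refine mul_mem ?_ ?_
        · exact hT1le (hconjT1 x hx t ht)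
        · exact (hmemJ1 _).mpr ⟨1, one_mem _, x * g * x⁻¹,
            mul_mem (mul_mem hx hg) (inv_mem hx), one_mul _⟩
      · rw [Set.mem_singleton_iff] at hx
        subst hx
        obtain ⟨a, haP, k, hgz⟩ := hform g hg
        obtain ⟨c, hc, rfl⟩ := mem_translations_iff.mp ht
        rw [hconjκtr c, hconjκg g a k hgz]
        refine mul_mem (hT1le (tr_mem_translations (neg_mem hc))) ?_
        refine (hmemJ1 _).mpr ⟨tr (1 - a), ?_, g, hg, rfl⟩
        refine tr_mem_translations ?_
        have h1a : (1 - a : F) = -(a - 1) := by ring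
        rw [h1a]
        exact neg_mem (AddSubgroup.subset_closure ⟨a, haP, rfl⟩)
    have hnormJ1 : Jgrp ≤ Subgroup.normalizer (J1 : Set (Equiv.Perm F)) := by
      rw [hJdef]
      refine (Subgroup.closure_le _).mpr ?_
      intro x hx
      rw [SetLike.mem_coe, Subgroup.mem_normalizer_iff]
      intro h
      constructor
      · exact fun hh => hconjgen x hx h hh
      · intro hh
        have hxinv : x⁻¹ ∈ (pstab G P : Set (Equiv.Perm F)) ∪ {kappa F} := by
          rcases hx with hx | hx
          · exact Or.inl (inv_mem hx)
          · rw [Set.mem_singleton_iff] at hx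
            subst hx
            rw [kappa_inv]
            exact Or.inr rfl
        have h2 := hconjgen x⁻¹ hxinv _ hh
        have heq : x⁻¹ * (x * h * x⁻¹) * x⁻¹⁻¹ = h := by group
        rwa [heq] at h2
    have hκnot : kappa F ∉ J1 := by
      intro hκ
      obtain ⟨t, ht, g, hg, heq⟩ := (hmemJ1 _).mp hκ
      obtain ⟨c, hc, rfl⟩ := mem_translations_iff.mp ht
      obtain ⟨-, hg0, -⟩ := mem_pstab_iff.mp hg
      have hgz : ∀ z : F, g z = -z + 1 - c := by
        intro z
        have h3 := congrArg (fun σ : Equiv.Perm F => σ z) heq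
        simp only [Equiv.Perm.mul_apply, tr_apply, kappa_apply] at h3
        rw [eq_sub_iff_add_eq, ← h3, add_comm]
      have hc1 : c = 1 := by
        have h4 := hg0
        rw [hgz 0, neg_zero, zero_add] at h4
        have := sub_eq_zero.mp h4
        exact this.symm
      have hgneg : ∀ z : F, g z = -z := by
        intro z
        rw [hgz z, hc1]
        ring
      apply hnotneg
      refine ⟨?_, ⟨g, (mem_pstab_iff.mp hg).1, fun z => ?_⟩⟩
      · have := himg g hg 1 hP1
        rwa [hgneg 1] at this
      · rw [hgneg z]
        norm_num
    have hunion : (Jgrp : Set (Equiv.Perm F)) =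
        (J1 : Set (Equiv.Perm F)) ∪
          (J1 : Set (Equiv.Perm F)) * ({kappa F} : Set (Equiv.Perm F)) := by
      have hκconj : ∀ y ∈ J1, kappa F * y * (kappa F)⁻¹ ∈ J1 :=
        hconjgen (kappa F) (Or.inr rfl)
      ext x
      simp only [SetLike.mem_coe, Set.mem_union]
      constructor
      · intro hx
        rw [hJdef] at hx
        refine Subgroup.closure_induction
          (p := fun g _ => g ∈ (J1 : Set (Equiv.Perm F)) ∨
            g ∈ (J1 : Set (Equiv.Perm F)) * ({kappa F} : Set (Equiv.Perm F)))
          ?_ ?_ ?_ ?_ hx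
        · intro y hy
          rcases hy with hy | hy
          · exact Or.inl ((hmemJ1 y).mpr ⟨1, one_mem _, y, hy, one_mul y⟩)
          · rw [Set.mem_singleton_iff] at hy
            subst hy
            exact Or.inr (Set.mem_mul.mpr ⟨1, one_mem _, kappa F, rfl, one_mul _⟩)
        · exact Or.inl (one_mem _)
        · rintro a b - - (ha | ha) (hb | hb)
          · exact Or.inl (mul_mem ha hb)
          · obtain ⟨u, hu, v, hv, rfl⟩ := Set.mem_mul.mp hb
            rw [Set.mem_singleton_iff] at hv; subst hv
            exact Or.inr (Set.mem_mul.mpr ⟨a * u, mul_mem ha hu, kappa F, rfl, by group⟩)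
          · obtain ⟨u, hu, v, hv, rfl⟩ := Set.mem_mul.mp ha
            rw [Set.mem_singleton_iff] at hv; subst hv
            refine Or.inr (Set.mem_mul.mpr
              ⟨u * (kappa F * b * (kappa F)⁻¹), mul_mem hu (hκconj b hb), kappa F, rfl, by group⟩)
          · obtain ⟨u, hu, v, hv, rfl⟩ := Set.mem_mul.mp ha
            rw [Set.mem_singleton_iff] at hv; subst hv
            obtain ⟨w, hw, v', hv', rfl⟩ := Set.mem_mul.mp hb
            rw [Set.mem_singleton_iff] at hv'; subst hv'
            refine Or.inl ?_
            have heq : u * kappa F * (w * kappa F) =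
                u * (kappa F * w * (kappa F)⁻¹) * (kappa F * kappa F) := by group
            rw [heq, kappa_mul_self, mul_one]
            exact mul_mem hu (hκconj w hw)
        · rintro a - (ha | ha)
          · exact Or.inl (inv_mem ha)
          · obtain ⟨u, hu, v, hv, rfl⟩ := Set.mem_mul.mp ha
            rw [Set.mem_singleton_iff] at hv; subst hv
            refine Or.inr (Set.mem_mul.mpr
              ⟨kappa F * u⁻¹ * (kappa F)⁻¹, hκconj u⁻¹ (inv_mem hu), kappa F, rfl, ?_⟩)
            rw [mul_inv_rev, kappa_inv, mul_assoc, mul_assoc, kappa_mul_self, mul_one]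
      · rintro (hx | hx)
        · exact hJ1le hx
        · obtain ⟨u, hu, v, hv, rfl⟩ := Set.mem_mul.mp hx
          rw [Set.mem_singleton_iff] at hv; subst hv
          exact mul_mem (hJ1le hu) hκJ
    exact ⟨J1, rfl, hJ1le, hT1le, hT1norm, hint T1s,
      (fun x hx y hy => (Subgroup.mem_normalizer_iff.mp (hnormJ1 hx) y).mp hy),
      hκnot, hunion⟩
  · -- even case
    intro heven
    have hneg := hEvenNeg heven
    obtain ⟨gneg, hgnegS, hgneg⟩ := hKpstab (-1) hneg
    have hgneg' : ∀ z : F, gneg z = -z := fun z => by rw [hgneg z, neg_one_mul]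
    have hκeq : kappa F = tr 1 * gneg := by
      ext z
      simp only [Equiv.Perm.mul_apply, tr_apply, kappa_apply, hgneg']
      ring
    have htr1 : tr 1 ∈ Jgrp := by
      have h1 : tr 1 = kappa F * gneg⁻¹ := by
        rw [hκeq, mul_assoc, mul_inv_cancel, mul_one]
      rw [h1]
      exact mul_mem hκJ (inv_mem (hpstabJ gneg hgnegS))
    have hT2J : translations (AddSubgroup.closure P) ≤ Jgrp := by
      intro x hx
      obtain ⟨c, hc, rfl⟩ := mem_translations_iff.mp hx
      refine htrsub P ?_ c hc
      intro b hb
      have hb1 : tr b = tr (b - 1) * tr 1 := by rw [tr_mul, sub_add_cancel]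
      rw [hb1]
      exact mul_mem (trgen b hb) htr1
    have hconjgen2 : ∀ x : Equiv.Perm F, x ∈ (pstab G P : Set (Equiv.Perm F)) ∪ {kappa F} →
        ∀ t ∈ translations (AddSubgroup.closure P),
          x * t * x⁻¹ ∈ translations (AddSubgroup.closure P) := by
      intro x hx t ht
      rcases hx with hx | hx
      · exact hconjT2 x hx t ht
      · rw [Set.mem_singleton_iff] at hx; subst hx
        obtain ⟨c, hc, rfl⟩ := mem_translations_iff.mp ht
        rw [hconjκtr c]
        exact tr_mem_translations (neg_mem hc)
    have hnorm2 : Jgrp ≤ Subgroup.normalizer (translations (AddSubgroup.closure P) : Set (Equiv.Perm F)) := by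
      rw [hJdef]
      refine (Subgroup.closure_le _).mpr ?_
      intro x hx
      rw [SetLike.mem_coe, Subgroup.mem_normalizer_iff]
      intro h
      constructor
      · exact fun hh => hconjgen2 x hx h hh
      · intro hh
        have hxinv : x⁻¹ ∈ (pstab G P : Set (Equiv.Perm F)) ∪ {kappa F} := by
          rcases hx with hx | hx
          · exact Or.inl (inv_mem hx)
          · rw [Set.mem_singleton_iff] at hx; subst hx
            rw [kappa_inv]; exact Or.inr rfl
        have h2 := hconjgen2 x⁻¹ hxinv _ hh
        have heq : x⁻¹ * (x * h * x⁻¹) * x⁻¹⁻¹ = h := by group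
        rwa [heq] at h2
    refine ⟨hT2J, (fun x hx t ht => (Subgroup.mem_normalizer_iff.mp (hnorm2 hx) t).mp ht),
      hint _, ?_⟩
    ext x
    constructor
    · intro hx
      rw [SetLike.mem_coe, hJdef] at hx
      refine Subgroup.closure_induction
        (p := fun g _ => g ∈ (translations (AddSubgroup.closure P) : Set (Equiv.Perm F)) *
          (pstab G P : Set (Equiv.Perm F))) ?_ ?_ ?_ ?_ hx
      · intro y hy
        rcases hy with hy | hy
        · exact Set.mem_mul.mpr ⟨1, one_mem _, y, hy, one_mul y⟩
        · rw [Set.mem_singleton_iff] at hy; subst hy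
          exact Set.mem_mul.mpr ⟨tr 1, tr_mem_translations (AddSubgroup.subset_closure hP1),
            gneg, hgnegS, hκeq.symm⟩
      · exact Set.mem_mul.mpr ⟨1, one_mem _, 1, one_mem _, one_mul 1⟩
      · rintro a b - - ha hb
        obtain ⟨t, ht, g, hg, rfl⟩ := Set.mem_mul.mp ha
        obtain ⟨t', ht', g', hg', rfl⟩ := Set.mem_mul.mp hb
        exact Set.mem_mul.mpr ⟨t * (g * t' * g⁻¹), mul_mem ht (hconjT2 g hg t' ht'),
          g * g', mul_mem hg hg', by group⟩
      · rintro a - ha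
        obtain ⟨t, ht, g, hg, rfl⟩ := Set.mem_mul.mp ha
        refine Set.mem_mul.mpr ⟨g⁻¹ * t⁻¹ * g, ?_, g⁻¹, inv_mem hg, by group⟩
        have h2 := hconjT2 g⁻¹ (inv_mem hg) t⁻¹ (inv_mem ht)
        simpa using h2
    · intro hx
      obtain ⟨t, ht, g, hg, rfl⟩ := Set.mem_mul.mp hx
      exact SetLike.mem_coe.mpr (mul_mem (hT2J ht) (hpstabJ g hg))
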